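/- Every finitely generated torsion-free nilpotent group satisfies Property N: for every a ∈ π, every finite subset S ⊆ π, and every integer n ≥ 1, if aⁿ ∈ Z(S) then a ∈ Z(S). -/

import Mathlib

open scoped commutatorElement

private lemma commutator_pow_left_of_commute {π : Type*} [Group π] (a y : π)
    (h : a * ⁅a, y⁆ = ⁅a, y⁆ * a) (n : ℕ) : ⁅a ^ n, y⁆ = ⁅a, y⁆ ^ n := by
  have hc : Commute a ⁅a, y⁆ := h
  set z := ⁅a, y⁆ with hzdef
  have hay : a * y * a⁻¹ = z * y := by rw [hzdef, commutatorElement_def]; group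
  have key : ∀ m, a ^ m * y * (a ^ m)⁻¹ = z ^ m * y := by
    intro m
    induction m with
    | zero => simp
    | succ m ih =>
      have h2 : a * z ^ m = z ^ m * a := (hc.pow_right m).eq
      calc a ^ (m + 1) * y * (a ^ (m + 1))⁻¹
          = a * (a ^ m * y * (a ^ m)⁻¹) * a⁻¹ := by
            rw [pow_succ']; simp [mul_assoc, mul_inv_rev]
        _ = a * (z ^ m * y) * a⁻¹ := by rw [ih]
        _ = a * z ^ m * (y * a⁻¹) := by simp [mul_assoc]
        _ = z ^ m * a * (y * a⁻¹) := by rw [h2]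
        _ = z ^ m * (a * y * a⁻¹) := by simp [mul_assoc]
        _ = z ^ m * (z * y) := by rw [hay]
        _ = z ^ (m + 1) * y := by rw [pow_succ, mul_assoc]
  calc ⁅a ^ n, y⁆ = a ^ n * y * (a ^ n)⁻¹ * y⁻¹ := commutatorElement_def _ _
    _ = z ^ n * y * y⁻¹ := by rw [key n]
    _ = z ^ n := by group

/-- Every finitely generated torsion-free nilpotent group satisfies Property N:
if `aⁿ ∈ Z(S)` for some finite set `S` and some `n ≥ 1`, then `a ∈ Z(S)`. -/
theorem stmt3 {π : Type*} [Group π] [Group.FG π] [Group.IsNilpotent π]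
    (htf : ∀ g : π, g ≠ 1 → ¬IsOfFinOrder g) :
    ∀ (a : π) (S : Finset π) (n : ℕ), 1 ≤ n →
      a ^ n ∈ Subgroup.centralizer (S : Set π) → a ∈ Subgroup.centralizer (S : Set π) := by
  intro a S n hn hmem
  rw [Subgroup.mem_centralizer_iff] at hmem ⊢
  intro s hs
  have hcomm : a ^ n * s = s * a ^ n := (hmem s hs).symm ▸ (hmem s hs)
  -- iterated commutators
  set y : ℕ → π := fun i => (fun z => ⁅a, z⁆)^[i] s with hy
  have hy0 : y 0 = s := rfl
  have hysucc : ∀ i, y (i + 1) = ⁅a, y i⁆ := by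
    intro i
    simp only [hy, Function.iterate_succ_apply']
  -- a^n commutes with every y i
  have hcen : ∀ i, Commute (a ^ n) (y i) := by
    intro i
    induction i with
    | zero => exact hcomm
    | succ i ih =>
      have pa : Commute (a ^ n) a := (Commute.refl a).pow_left n
      rw [hysucc, commutatorElement_def]
      exact ((pa.mul_right ih).mul_right pa.inv_right).mul_right ih.inv_right
  -- y i lies in the lower central series
  have hlcs : ∀ i, y i ∈ Subgroup.lowerCentralSeries (⊤ : Subgroup π) i := by
    intro i
    induction i with
    | zero => exact Subgroup.mem_top _
    | succ i ih =>
      have hrfl : Subgroup.lowerCentralSeries (⊤ : Subgroup π) (i + 1) = ⁅Subgroup.lowerCentralSeries (⊤ : Subgroup π) i, ⊤⁆ := rfl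
      rw [hysucc, hrfl, Subgroup.commutator_comm]
      exact Subgroup.commutator_mem_commutator (Subgroup.mem_top a) ih
  -- descent step
  have hstep : ∀ j, y (j + 2) = 1 → y (j + 1) = 1 := by
    intro j h1
    rw [hysucc] at h1
    have hc : a * ⁅a, y j⁆ = ⁅a, y j⁆ * a := by
      have h2 := commutatorElement_eq_one_iff_mul_comm.mp h1
      rwa [hysucc] at h2
    have hpow : ⁅a ^ n, y j⁆ = ⁅a, y j⁆ ^ n := commutator_pow_left_of_commute a (y j) hc n
    have h0 : ⁅a ^ n, y j⁆ = 1 := commutatorElement_eq_one_iff_mul_comm.mpr (hcen j)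
    have hzn : (y (j + 1)) ^ n = 1 := by rw [hysucc, ← hpow, h0]
    by_contra hne
    exact htf _ hne (isOfFinOrder_iff_pow_eq_one.mpr ⟨n, hn, hzn⟩)
  -- downward induction to y 1 = 1
  have hdown : ∀ m, y (m + 1) = 1 → y 1 = 1 := by
    intro m
    induction m with
    | zero => exact id
    | succ m ih => exact fun h => ih (hstep m h)
  obtain ⟨N, hN⟩ := Subgroup.nilpotent_iff_lowerCentralSeries.mp (inferInstance : Group.IsNilpotent π)
  have hyN : y (N + 1) = 1 := by
    have : y (N + 1) ∈ Subgroup.lowerCentralSeries (⊤ : Subgroup π) N :=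
      Subgroup.lowerCentralSeries_antitone ⊤ (Nat.le_succ N) (hlcs (N + 1))
    rw [hN] at this
    exact Subgroup.mem_bot.mp this
  have h1 : ⁅a, s⁆ = 1 := by rw [← hy0, ← hysucc]; exact hdown N hyN
  have := commutatorElement_eq_one_iff_mul_comm.mp h1
  rw [this]
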